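/- Let d ∈ ℕ and let (A, α) and (B, β) be interpretations, i.e., finite linear orders A_M, A_N with assignments of the variables x, y, z (extended by min and max). If the d-type of (A, α) equals the d-type of (B, β) — meaning the orderings of the five values α(min), α(x), α(y), α(z), α(max) and β(min), β(x), β(y), β(z), β(max) agree, and each consecutive gap is either equal in both interpretations or exceeds 2^{d+1} in both — then (A, α) and (B, β) satisfy the same first-order {<}-formulas of quantifier depth at most d. -/

import Mathlib

open FirstOrder

/-- Quantifier depth of a bounded formula. -/
def qdepth {L : Language} {α : Type} : ∀ {n : ℕ}, L.BoundedFormula α n → ℕ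
  | _, .falsum => 0
  | _, .equal _ _ => 0
  | _, .rel _ _ => 0
  | _, .imp f g => max (qdepth f) (qdepth g)
  | _, .all f => qdepth f + 1

attribute [local instance] FirstOrder.Language.orderStructure

def Etup (P : ℕ) {γ : Type} (a b : γ → ℕ) : Prop :=
  ∀ i j, a j - a i = b j - b i ∨ (P ≤ a j - a i ∧ P ≤ b j - b i)

lemma Etup.symm {P : ℕ} {γ : Type} {a b : γ → ℕ} (h : Etup P a b) : Etup P b a := by
  intro i j; rcases h i j with h' | h'
  · exact Or.inl h'.symm
  · exact Or.inr ⟨h'.2, h'.1⟩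

/-- The combined tuple of a 5-variable assignment and extra free variables, as naturals. -/
def ext5 {M n : ℕ} (v : Fin 5 → Fin (M + 1)) (xs : Fin n → Fin (M + 1)) :
    (Fin 5 ⊕ Fin n) → ℕ := fun i => ((Sum.elim v xs i : Fin (M + 1)) : ℕ)

lemma ext5_old {M n : ℕ} (v : Fin 5 → Fin (M + 1)) (xs : Fin n → Fin (M + 1))
    (u : Fin (M + 1)) (i : Fin 5 ⊕ Fin n) :
    ext5 v (Fin.snoc xs u) (Sum.map id Fin.castSucc i) = ext5 v xs i := by
  rcases i with s | t <;> simp [ext5]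

lemma ext5_new {M n : ℕ} (v : Fin 5 → Fin (M + 1)) (xs : Fin n → Fin (M + 1))
    (u : Fin (M + 1)) :
    ext5 v (Fin.snoc xs u) (Sum.inr (Fin.last n)) = (u : ℕ) := by
  simp [ext5]

lemma cover {n : ℕ} (p : Fin 5 ⊕ Fin (n + 1)) :
    (∃ i : Fin 5 ⊕ Fin n, p = Sum.map id Fin.castSucc i) ∨ p = Sum.inr (Fin.last n) := by
  rcases p with s | t
  · exact Or.inl ⟨Sum.inl s, rfl⟩
  · rcases Fin.eq_castSucc_or_eq_last t with ⟨t', rfl⟩ | rfl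
    · exact Or.inl ⟨Sum.inr t', rfl⟩
    · exact Or.inr rfl

lemma term_var {γ : Type} (t : Language.order.Term γ) : ∃ i, t = FirstOrder.Language.Term.var i := by
  cases t with
  | var i => exact ⟨i, rfl⟩
  | func f ts => exact Empty.elim f

set_option maxHeartbeats 1000000 in
lemma forth {γ : Type} [Fintype γ] {P : ℕ} (hP : 0 < P) {a b : γ → ℕ}
    (h : ∀ i j, a j - a i = b j - b i ∨ (2 * P ≤ a j - a i ∧ 2 * P ≤ b j - b i))
    {u : ℕ} {lo hi : γ} (hlo : a lo ≤ u) (hhi : u ≤ a hi) :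
    ∃ z : ℕ, (∃ j, u ≤ a j ∧ z ≤ b j) ∧
      ∀ i, (u - a i = z - b i ∨ (P ≤ u - a i ∧ P ≤ z - b i)) ∧
           (a i - u = b i - z ∨ (P ≤ a i - u ∧ P ≤ b i - z)) := by
  classical
  obtain ⟨i0, hi0mem, hi0max⟩ := Finset.exists_max_image
    (Finset.univ.filter (fun i => a i ≤ u)) a
    ⟨lo, by simpa using hlo⟩
  obtain ⟨j0, hj0mem, hj0min⟩ := Finset.exists_min_image
    (Finset.univ.filter (fun i => u ≤ a i)) a
    ⟨hi, by simpa using hhi⟩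
  simp only [Finset.mem_filter, Finset.mem_univ, true_and] at hi0mem hj0mem
  have Hmax : ∀ i, a i ≤ u → a i ≤ a i0 := fun i hi' =>
    hi0max i (by simpa using hi')
  have Hmin : ∀ i, u ≤ a i → a j0 ≤ a i := fun i hi' =>
    hj0min i (by simpa using hi')
  have g1 := h i0 j0
  have g2 := h j0 i0
  have key : ∀ z : ℕ,
      ((u - a i0 < P ∧ z = b i0 + (u - a i0)) ∨
       (P ≤ u - a i0 ∧ a j0 - u < P ∧ z = b j0 - (a j0 - u)) ∨
       (P ≤ u - a i0 ∧ P ≤ a j0 - u ∧ z = b i0 + P)) →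
      (u ≤ a j0 ∧ z ≤ b j0) ∧
      ∀ i, (u - a i = z - b i ∨ (P ≤ u - a i ∧ P ≤ z - b i)) ∧
           (a i - u = b i - z ∨ (P ≤ a i - u ∧ P ≤ b i - z)) := by
    intro z hz
    constructor
    · omega
    · intro i
      have c1 := h i i0
      have c2 := h i0 i
      have c3 := h i j0
      have c4 := h j0 i
      have hcase : a i ≤ a i0 ∨ a j0 ≤ a i := by
        rcases le_or_gt (a i) u with hc | hc
        · exact Or.inl (Hmax i hc)
        · exact Or.inr (Hmin i (le_of_lt hc))
      rcases hz with ⟨hz1, rfl⟩ | ⟨hz1, hz2, rfl⟩ | ⟨hz1, hz2, rfl⟩ <;>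
        rcases hcase with hc | hc <;> constructor <;> omega
  by_cases h1 : u - a i0 < P
  · obtain ⟨h2, h3⟩ := key (b i0 + (u - a i0)) (Or.inl ⟨h1, rfl⟩)
    exact ⟨_, ⟨j0, h2.1, h2.2⟩, h3⟩
  · by_cases h2 : a j0 - u < P
    · obtain ⟨h3, h4⟩ := key (b j0 - (a j0 - u)) (Or.inr (Or.inl ⟨by omega, h2, rfl⟩))
      exact ⟨_, ⟨j0, h3.1, h3.2⟩, h4⟩
    · obtain ⟨h3, h4⟩ := key (b i0 + P) (Or.inr (Or.inr ⟨by omega, by omega, rfl⟩))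
      exact ⟨_, ⟨j0, h3.1, h3.2⟩, h4⟩

lemma step {k M N n : ℕ} (v : Fin 5 → Fin (M + 1)) (xs : Fin n → Fin (M + 1))
    (w : Fin 5 → Fin (N + 1)) (ys : Fin n → Fin (N + 1))
    (hv0 : (v 0 : ℕ) = 0) (hv4 : (v 4 : ℕ) = M)
    (hE : Etup (2 ^ (k + 1)) (ext5 v xs) (ext5 w ys)) (u : Fin (M + 1)) :
    ∃ u' : Fin (N + 1),
      Etup (2 ^ k) (ext5 v (Fin.snoc xs u)) (ext5 w (Fin.snoc ys u')) := by
  have h2 : ∀ i j, ext5 v xs j - ext5 v xs i = ext5 w ys j - ext5 w ys i ∨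
      (2 * 2 ^ k ≤ ext5 v xs j - ext5 v xs i ∧ 2 * 2 ^ k ≤ ext5 w ys j - ext5 w ys i) := by
    have e : 2 * 2 ^ k = 2 ^ (k + 1) := by ring
    rw [e]; exact hE
  have hlo : ext5 v xs (Sum.inl 0) ≤ (u : ℕ) := by simp [ext5, hv0]
  have hhi : (u : ℕ) ≤ ext5 v xs (Sum.inl 4) := by
    simp only [ext5, Sum.elim_inl, hv4]; omega
  obtain ⟨z, ⟨j, hj1, hj2⟩, hz⟩ := forth (pow_pos (by norm_num) k) h2 hlo hhi
  have hzN : z ≤ N := by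
    have : ext5 w ys j < N + 1 := (Sum.elim w ys j).2
    omega
  refine ⟨⟨z, by omega⟩, ?_⟩
  intro p q
  rcases cover p with ⟨i, rfl⟩ | rfl <;> rcases cover q with ⟨i', rfl⟩ | rfl
  · rw [ext5_old, ext5_old, ext5_old, ext5_old]
    have := hE i i'
    have hle : (2:ℕ) ^ k ≤ 2 ^ (k + 1) := Nat.pow_le_pow_right (by norm_num) (by omega)
    omega
  · rw [ext5_old, ext5_old, ext5_new, ext5_new]
    exact (hz i).1
  · rw [ext5_old, ext5_old, ext5_new, ext5_new]
    exact (hz i').2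
  · left; rw [ext5_new, ext5_new]; omega

lemma main {M N : ℕ} (v : Fin 5 → Fin (M + 1)) (w : Fin 5 → Fin (N + 1))
    (hv0 : (v 0 : ℕ) = 0) (hv4 : (v 4 : ℕ) = M)
    (hw0 : (w 0 : ℕ) = 0) (hw4 : (w 4 : ℕ) = N) :
    ∀ {n : ℕ} (φ : Language.order.BoundedFormula (Fin 5) n) (k : ℕ),
      qdepth φ ≤ k →
      ∀ (xs : Fin n → Fin (M + 1)) (ys : Fin n → Fin (N + 1)),
        Etup (2 ^ k) (ext5 v xs) (ext5 w ys) →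
        (φ.Realize v xs ↔ φ.Realize w ys) := by
  intro n0 φ
  induction φ with
  | @falsum n => intro k hk xs ys hE; exact Iff.rfl
  | @equal n t₁ t₂ =>
    intro k hk xs ys hE
    obtain ⟨i, rfl⟩ := term_var t₁
    obtain ⟨j, rfl⟩ := term_var t₂
    simp only [Language.BoundedFormula.Realize, Language.Term.realize]
    have h1 := hE i j
    have h2 := hE j i
    have hP : 0 < 2 ^ k := pow_pos (by norm_num) k
    simp only [ext5] at h1 h2
    rw [← Fin.val_eq_val, ← Fin.val_eq_val]
    omega
  | @rel n l R ts =>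
    intro k hk xs ys hE
    cases R
    obtain ⟨i, e1⟩ := term_var (ts 0)
    obtain ⟨j, e2⟩ := term_var (ts 1)
    have hrw : ∀ {K : ℕ} (q : Fin 5 → Fin (K+1)) (qs : Fin n → Fin (K+1)),
        (Language.BoundedFormula.rel Language.orderRel.le ts).Realize q qs ↔
          Sum.elim q qs i ≤ Sum.elim q qs j := by
      intro K q qs
      have base : (Language.BoundedFormula.rel Language.orderRel.le ts).Realize q qs ↔
          Language.Term.realize (Sum.elim q qs) (ts 0) ≤
            Language.Term.realize (Sum.elim q qs) (ts 1) := Iff.rfl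
      rw [e1, e2] at base
      simpa using base
    rw [hrw v xs, hrw w ys, Fin.le_def, Fin.le_def]
    have h1 := hE i j
    have h2 := hE j i
    have hP : 0 < 2 ^ k := pow_pos (by norm_num) k
    simp only [ext5] at h1 h2
    omega
  | @imp n f g ihf ihg =>
    intro k hk xs ys hE
    have hk' : max (qdepth f) (qdepth g) ≤ k := hk
    exact imp_congr (ihf k (by omega) xs ys hE) (ihg k (by omega) xs ys hE)
  | @all n f ih =>
    intro k hk xs ys hE
    have hk1 : qdepth f + 1 ≤ k := hk
    obtain ⟨k, rfl⟩ : ∃ k', k = k' + 1 := ⟨k - 1, by omega⟩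
    rw [Language.BoundedFormula.realize_all, Language.BoundedFormula.realize_all]
    constructor
    · intro H x
      obtain ⟨x', hE'⟩ := step w ys v xs hw0 hw4 hE.symm x
      exact (ih k (by omega) _ _ hE'.symm).mp (H x')
    · intro H x
      obtain ⟨x', hE'⟩ := step v xs w ys hv0 hv4 hE x
      exact (ih k (by omega) _ _ hE').mpr (H x')

/-- Interpretations are finite linear orders `{0,…,M}` together with an
assignment of the five values min, x, y, z, max (modelled as `Fin 5 → Fin (M+1)`,
with component 0 = min = 0 and component 4 = max = M).  If the d-types agree —
the sorted arrangements (given by a common permutation σ) coincide and each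
consecutive gap is either equal in both interpretations or at least `2^(d+1)`
in both — then the interpretations satisfy the same first-order {<}-formulas of
quantifier depth at most d. -/
theorem stmt_15 (d M N : ℕ)
    (α : Fin 5 → Fin (M + 1)) (β : Fin 5 → Fin (N + 1))
    (hα0 : α 0 = 0) (hα4 : α 4 = Fin.last M)
    (hβ0 : β 0 = 0) (hβ4 : β 4 = Fin.last N)
    (σ : Equiv.Perm (Fin 5))
    (hmonoα : ∀ i j : Fin 5, i ≤ j → α (σ i) ≤ α (σ j))
    (hmonoβ : ∀ i j : Fin 5, i ≤ j → β (σ i) ≤ β (σ j))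
    (hgap : ∀ i : Fin 4,
      ((α (σ i.succ) : ℕ) - (α (σ i.castSucc) : ℕ) =
        (β (σ i.succ) : ℕ) - (β (σ i.castSucc) : ℕ)) ∨
      (2 ^ (d + 1) ≤ (α (σ i.succ) : ℕ) - (α (σ i.castSucc) : ℕ) ∧
        2 ^ (d + 1) ≤ (β (σ i.succ) : ℕ) - (β (σ i.castSucc) : ℕ)))
    (φ : Language.order.Formula (Fin 5)) (hφ : qdepth φ ≤ d) :
    (letI := Language.orderStructure (Fin (M + 1)); φ.Realize α) ↔
      (letI := Language.orderStructure (Fin (N + 1)); φ.Realize β) := by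
  have key0 : ∀ (j : ℕ) (hj : j < 5) (i : ℕ) (hi : i < 5), i ≤ j →
      ((α (σ ⟨j, hj⟩) : ℕ) - (α (σ ⟨i, hi⟩) : ℕ) =
        (β (σ ⟨j, hj⟩) : ℕ) - (β (σ ⟨i, hi⟩) : ℕ) ∨
       (2 ^ (d + 1) ≤ (α (σ ⟨j, hj⟩) : ℕ) - (α (σ ⟨i, hi⟩) : ℕ) ∧
        2 ^ (d + 1) ≤ (β (σ ⟨j, hj⟩) : ℕ) - (β (σ ⟨i, hi⟩) : ℕ))) := by
    intro j
    induction j with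
    | zero =>
      intro hj i hi hij
      obtain rfl : i = 0 := by omega
      rw [show (⟨0, hj⟩ : Fin 5) = ⟨0, hi⟩ from rfl]
      exact Or.inl (by omega)
    | succ jn ihn =>
      intro hj i hi hij
      rcases Nat.lt_or_ge i (jn + 1) with hlt | hge
      · have hjn : jn < 5 := by omega
        have h1 := ihn hjn i hi (by omega)
        have hg : ((α (σ ⟨jn + 1, hj⟩) : ℕ) - (α (σ ⟨jn, hjn⟩) : ℕ) =
              (β (σ ⟨jn + 1, hj⟩) : ℕ) - (β (σ ⟨jn, hjn⟩) : ℕ)) ∨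
            (2 ^ (d + 1) ≤ (α (σ ⟨jn + 1, hj⟩) : ℕ) - (α (σ ⟨jn, hjn⟩) : ℕ) ∧
             2 ^ (d + 1) ≤ (β (σ ⟨jn + 1, hj⟩) : ℕ) - (β (σ ⟨jn, hjn⟩) : ℕ)) := by
          exact hgap ⟨jn, by omega⟩
        have m1 := hmonoα ⟨i, hi⟩ ⟨jn, hjn⟩ (by simp [Fin.mk_le_mk]; omega)
        have m2 := hmonoα ⟨jn, hjn⟩ ⟨jn + 1, hj⟩ (by simp [Fin.mk_le_mk])
        have m3 := hmonoβ ⟨i, hi⟩ ⟨jn, hjn⟩ (by simp [Fin.mk_le_mk]; omega)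
        have m4 := hmonoβ ⟨jn, hjn⟩ ⟨jn + 1, hj⟩ (by simp [Fin.mk_le_mk])
        rw [Fin.le_def] at m1 m2 m3 m4
        omega
      · obtain rfl : i = jn + 1 := by omega
        rw [show (⟨jn + 1, hj⟩ : Fin 5) = ⟨jn + 1, hi⟩ from rfl]
        exact Or.inl (by omega)
  have key : ∀ p q : Fin 5,
      ((α q : ℕ) - (α p : ℕ) = (β q : ℕ) - (β p : ℕ) ∨
       (2 ^ d ≤ (α q : ℕ) - (α p : ℕ) ∧ 2 ^ d ≤ (β q : ℕ) - (β p : ℕ))) := by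
    intro p q
    have hpow : (2 : ℕ) ^ (d + 1) = 2 * 2 ^ d := by ring
    rcases le_total (σ.symm p) (σ.symm q) with h | h
    · have h1 := key0 (σ.symm q).1 (σ.symm q).2 (σ.symm p).1 (σ.symm p).2 h
      simp only [Fin.eta, Equiv.apply_symm_apply] at h1
      omega
    · have m1 := hmonoα (σ.symm q) (σ.symm p) h
      have m2 := hmonoβ (σ.symm q) (σ.symm p) h
      simp only [Equiv.apply_symm_apply] at m1 m2
      rw [Fin.le_def] at m1 m2
      left; omega
  have h1 : (α 0 : ℕ) = 0 := by rw [hα0]; rfl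
  have h2 : (α 4 : ℕ) = M := by rw [hα4]; simp
  have h3 : (β 0 : ℕ) = 0 := by rw [hβ0]; rfl
  have h4 : (β 4 : ℕ) = N := by rw [hβ4]; simp
  have hE : Etup (2 ^ d) (ext5 α (default : Fin 0 → Fin (M + 1))) (ext5 β (default : Fin 0 → Fin (N + 1))) := by
    intro p q
    rcases p with p | x
    · rcases q with q | x
      · simpa only [ext5, Sum.elim_inl] using key p q
      · exact x.elim0
    · exact x.elim0
  unfold Language.Formula.Realize
  convert main α β h1 h2 h3 h4 φ d hφ default default hE using 2 <;>
    exact Subsingleton.elim _ _
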